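/- arXiv:1702.00922 — 2 statements merged into one kernel-verified Lean document; each statement's English description precedes it below -/
import Mathlib

section
/- For every α, β ∈ {−1, 1}, a three-element subset of the configuration C_{α,β} is collinear in ℙ²(ℝ) if and only if it is one of the following fifteen triples: {V₁,S₁,S₁₀}, {V₁,S₂,S₄}, {V₁,S₃,S₆}, {V₁,S₅,S₇}, {V₁,S₈,S₉}, {V₂,S₁,S₇}, {V₂,S₂,S₃}, {V₂,S₄,S₉}, {V₂,S₅,S₆}, {V₂,S₈,S₁₀}, {V₃,S₁,S₂}, {V₃,S₃,S₅}, {V₃,S₄,S₈}, {V₃,S₆,S₇}, {V₃,S₉,S₁₀}. In particular no four points of C_{α,β} are collinear. -/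
noncomputable section

/-- The real projective plane `ℙ²(ℝ)`. -/
abbrev ProjPlaneR := Projectivization ℝ (Fin 3 → ℝ)

/-- A vector `![a,b,c]` with a nonzero coordinate is nonzero. -/
theorem vne (a b c : ℝ) (i : Fin 3) (h : ![a, b, c] i ≠ 0) : ![a, b, c] ≠ 0 :=
  fun he => h (by rw [he]; simp)

/-- The point `(a : b : c)` of `ℙ²(ℝ)`. -/
def mkP (a b c : ℝ) (h : ![a, b, c] ≠ 0) : ProjPlaneR :=
  Projectivization.mk ℝ ![a, b, c] h

/-- A set of points of `ℙ²(ℝ)` lies on a common projective line iff some nonzero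
linear form vanishes on (representatives of) all of them. -/
def ProjCollinear (s : Set ProjPlaneR) : Prop :=
  ∃ f : (Fin 3 → ℝ) →ₗ[ℝ] ℝ, f ≠ 0 ∧ ∀ p ∈ s, f p.rep = 0

/-! The points of the configuration `C_{α,β}`. -/

def V₁ : ProjPlaneR := mkP 0 1 0 (vne _ _ _ 1 (by norm_num))
def V₂ : ProjPlaneR := mkP 1 0 0 (vne _ _ _ 0 (by norm_num))
def V₃ : ProjPlaneR := mkP 0 0 1 (vne _ _ _ 2 (by simp))
def S₁ : ProjPlaneR := mkP 1 1 1 (vne _ _ _ 0 (by norm_num))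
def S₂ : ProjPlaneR := mkP 4 4 1 (vne _ _ _ 0 (by norm_num))
def S₃ : ProjPlaneR := mkP (-1) 8 2 (vne _ _ _ 0 (by norm_num))
def S₄ : ProjPlaneR := mkP 8 (-1) 2 (vne _ _ _ 0 (by norm_num))
def S₅ (α : ℝ) : ProjPlaneR := mkP (-1) 8 (4 * α) (vne _ _ _ 0 (by norm_num))
def S₆ (α : ℝ) : ProjPlaneR := mkP (-1) (4 * α) 2 (vne _ _ _ 0 (by norm_num))
def S₇ (α : ℝ) : ProjPlaneR := mkP (-α) 4 4 (vne _ _ _ 1 (by norm_num))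
def S₈ (β : ℝ) : ProjPlaneR := mkP 8 (-1) (4 * β) (vne _ _ _ 0 (by norm_num))
def S₉ (β : ℝ) : ProjPlaneR := mkP (4 * β) (-1) 2 (vne _ _ _ 1 (by norm_num))
def S₁₀ (β : ℝ) : ProjPlaneR := mkP 4 (-β) 4 (vne _ _ _ 0 (by norm_num))

/-- The configuration `C_{α,β}` as a set of 13 points of `ℙ²(ℝ)`. -/
def Cconf (α β : ℝ) : Set ProjPlaneR :=
  {V₁, V₂, V₃, S₁, S₂, S₃, S₄, S₅ α, S₆ α, S₇ α, S₈ β, S₉ β, S₁₀ β}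

/-! ### Auxiliary machinery -/

open Matrix

def d3 {R : Type*} [CommRing R] (u v w : Fin 3 → R) : R :=
  u 0 * (v 1 * w 2 - v 2 * w 1) - u 1 * (v 0 * w 2 - v 2 * w 0) + u 2 * (v 0 * w 1 - v 1 * w 0)

theorem frep (f : (Fin 3 → ℝ) →ₗ[ℝ] ℝ) (u : Fin 3 → ℝ) (hu : u ≠ 0) :
    f (Projectivization.mk ℝ u hu).rep = 0 ↔ f u = 0 := by
  obtain ⟨a, ha⟩ := Projectivization.exists_smul_eq_mk_rep ℝ u hu
  rw [← ha, Units.smul_def, _root_.map_smul, smul_eq_mul, mul_eq_zero]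
  simp [Units.ne_zero a]

theorem dot_eq (f : (Fin 3 → ℝ) →ₗ[ℝ] ℝ) (z : Fin 3 → ℝ) :
    z ⬝ᵥ (fun i => f fun j => if i = j then 1 else 0) = f z := by
  rw [LinearMap.pi_apply_eq_sum_univ f z, dotProduct]
  simp [smul_eq_mul]

theorem collinear_iff_d3 (u v w : Fin 3 → ℝ) (hu : u ≠ 0) (hv : v ≠ 0) (hw : w ≠ 0) :
    ProjCollinear {Projectivization.mk ℝ u hu, Projectivization.mk ℝ v hv,
      Projectivization.mk ℝ w hw} ↔ d3 u v w = 0 := by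
  have hdet : d3 u v w = (Matrix.of ![u, v, w]).det := by
    rw [Matrix.det_fin_three]; simp [d3]; ring
  rw [hdet, ← Matrix.exists_mulVec_eq_zero_iff]
  constructor
  · rintro ⟨f, hf, hvan⟩
    refine ⟨fun i => f (fun j => if i = j then 1 else 0), ?_, ?_⟩
    · intro hg
      apply hf
      refine LinearMap.ext fun x => ?_
      have : x ⬝ᵥ (fun i => f fun j => if i = j then 1 else 0) = x ⬝ᵥ 0 := by rw [hg]
      rw [dot_eq] at this
      simpa using this
    · funext i
      have hmv : ((Matrix.of ![u, v, w]) *ᵥ fun i => f fun j => if i = j then 1 else 0) i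
          = f (![u, v, w] i) := by
        simp only [Matrix.mulVec, Matrix.of_apply]
        exact dot_eq f _
      rw [hmv]
      fin_cases i
      · exact (frep f u hu).mp (hvan _ (by simp))
      · exact (frep f v hv).mp (hvan _ (by simp))
      · exact (frep f w hw).mp (hvan _ (by simp))
  · rintro ⟨g, hg, hmv⟩
    refine ⟨∑ i, g i • LinearMap.proj i, ?_, ?_⟩
    · intro hf
      apply hg
      funext j
      have : (∑ i, g i • (LinearMap.proj i : (Fin 3 → ℝ) →ₗ[ℝ] ℝ))
          (fun k => if k = j then 1 else 0) = 0 := by rw [hf]; rfl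
      simpa [LinearMap.proj, Finset.sum_ite_eq] using this
    · have hfz : ∀ z : Fin 3 → ℝ,
          (∑ i, g i • (LinearMap.proj i : (Fin 3 → ℝ) →ₗ[ℝ] ℝ)) z = z ⬝ᵥ g := by
        intro z
        simp [LinearMap.proj, dotProduct, mul_comm]
      intro p hp
      rcases hp with rfl | rfl | rfl
      · rw [frep, hfz]
        have := congrFun hmv 0
        simpa [Matrix.mulVec, dotProduct] using this
      · rw [frep, hfz]
        have := congrFun hmv 1
        simpa [Matrix.mulVec, dotProduct] using this
      · rw [frep, hfz]
        have := congrFun hmv 2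
        simpa [Matrix.mulVec, dotProduct] using this

theorem collinear_mono {s t : Set ProjPlaneR} (hst : s ⊆ t) (h : ProjCollinear t) :
    ProjCollinear s := by
  obtain ⟨f, hf, hv⟩ := h
  exact ⟨f, hf, fun p hp => hv p (hst hp)⟩

theorem mk_congr (u v : Fin 3 → ℝ) (h : u = v) (hu : u ≠ 0) (hv : v ≠ 0) :
    Projectivization.mk ℝ u hu = Projectivization.mk ℝ v hv := by subst h; rfl

/-! ### Integer model -/

def sg (s : Bool) : ℤ := if s then 1 else -1

def vecZ (sa sb : Bool) (i : Fin 13) : Fin 3 → ℤ :=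
  match i with
  | ⟨0,_⟩ => ![0,1,0] | ⟨1,_⟩ => ![1,0,0] | ⟨2,_⟩ => ![0,0,1] | ⟨3,_⟩ => ![1,1,1]
  | ⟨4,_⟩ => ![4,4,1] | ⟨5,_⟩ => ![-1,8,2] | ⟨6,_⟩ => ![8,-1,2]
  | ⟨7,_⟩ => ![-1,8,4*sg sa] | ⟨8,_⟩ => ![-1,4*sg sa,2] | ⟨9,_⟩ => ![-(sg sa),4,4]
  | ⟨10,_⟩ => ![8,-1,4*sg sb] | ⟨11,_⟩ => ![4*sg sb,-1,2] | ⟨12,_⟩ => ![4,-(sg sb),4]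

def dZ (sa sb : Bool) (i j k : Fin 13) : ℤ :=
  d3 (vecZ sa sb i) (vecZ sa sb j) (vecZ sa sb k)

def vecR (α β : ℝ) (i : Fin 13) : Fin 3 → ℝ :=
  match i with
  | ⟨0,_⟩ => ![0,1,0] | ⟨1,_⟩ => ![1,0,0] | ⟨2,_⟩ => ![0,0,1] | ⟨3,_⟩ => ![1,1,1]
  | ⟨4,_⟩ => ![4,4,1] | ⟨5,_⟩ => ![-1,8,2] | ⟨6,_⟩ => ![8,-1,2]
  | ⟨7,_⟩ => ![-1,8,4*α] | ⟨8,_⟩ => ![-1,4*α,2] | ⟨9,_⟩ => ![-α,4,4]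
  | ⟨10,_⟩ => ![8,-1,4*β] | ⟨11,_⟩ => ![4*β,-1,2] | ⟨12,_⟩ => ![4,-β,4]

theorem vecR_nonzero (α β : ℝ) (i : Fin 13) : vecR α β i ≠ 0 := by
  intro h
  fin_cases i <;> simp only [vecR] at h <;>
    simp only [Matrix.cons_eq_zero_iff, Matrix.zero_empty, and_true] at h <;>
    norm_num at h

def Pt (α β : ℝ) (i : Fin 13) : ProjPlaneR :=
  Projectivization.mk ℝ (vecR α β i) (vecR_nonzero α β i)

theorem vecR_cast (sa sb : Bool) (i : Fin 13) (n : Fin 3) :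
    vecR ((sg sa : ℤ) : ℝ) ((sg sb : ℤ) : ℝ) i n = ((vecZ sa sb i n : ℤ) : ℝ) := by
  fin_cases i <;> fin_cases n <;> simp [vecR, vecZ]

theorem dR_cast (sa sb : Bool) (i j k : Fin 13) :
    d3 (vecR ((sg sa : ℤ) : ℝ) ((sg sb : ℤ) : ℝ) i) (vecR ((sg sa : ℤ) : ℝ) ((sg sb : ℤ) : ℝ) j)
      (vecR ((sg sa : ℤ) : ℝ) ((sg sb : ℤ) : ℝ) k) = ((dZ sa sb i j k : ℤ) : ℝ) := by
  simp only [d3, dZ, vecR_cast]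
  push_cast
  ring

set_option maxRecDepth 100000 in
theorem DEC2 : ∀ (sa sb : Bool) (i j : Fin 13), i ≠ j → ∃ k, dZ sa sb i j k ≠ 0 := by decide

set_option maxRecDepth 100000 in
set_option maxHeartbeats 4000000 in
theorem DEC1 : ∀ (sa sb : Bool) (i j k : Fin 13), i ≠ j → i ≠ k → j ≠ k →
    (dZ sa sb i j k = 0 ↔
      (({i,j,k} : Finset (Fin 13)) = {0,3,12} ∨ ({i,j,k} : Finset (Fin 13)) = {0,4,6} ∨
       ({i,j,k} : Finset (Fin 13)) = {0,5,8} ∨ ({i,j,k} : Finset (Fin 13)) = {0,7,9} ∨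
       ({i,j,k} : Finset (Fin 13)) = {0,10,11} ∨ ({i,j,k} : Finset (Fin 13)) = {1,3,9} ∨
       ({i,j,k} : Finset (Fin 13)) = {1,4,5} ∨ ({i,j,k} : Finset (Fin 13)) = {1,6,11} ∨
       ({i,j,k} : Finset (Fin 13)) = {1,7,8} ∨ ({i,j,k} : Finset (Fin 13)) = {1,10,12} ∨
       ({i,j,k} : Finset (Fin 13)) = {2,3,4} ∨ ({i,j,k} : Finset (Fin 13)) = {2,5,7} ∨
       ({i,j,k} : Finset (Fin 13)) = {2,6,10} ∨ ({i,j,k} : Finset (Fin 13)) = {2,8,9} ∨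
       ({i,j,k} : Finset (Fin 13)) = {2,11,12})) := by decide

def LF : Fin 15 → Finset (Fin 13) :=
  ![{0,3,12}, {0,4,6}, {0,5,8}, {0,7,9}, {0,10,11}, {1,3,9}, {1,4,5}, {1,6,11},
   {1,7,8}, {1,10,12}, {2,3,4}, {2,5,7}, {2,6,10}, {2,8,9}, {2,11,12}]

set_option maxRecDepth 100000 in
set_option maxHeartbeats 4000000 in
theorem DEC_inter : ∀ m n : Fin 15, m ≠ n → ∀ x y : Fin 13,
    x ∈ LF m → x ∈ LF n → y ∈ LF m → y ∈ LF n → x = y := by decide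

set_option maxHeartbeats 2000000

/--
For `α, β ∈ {−1,1}`, a three-element subset of the configuration `C_{α,β}`
is collinear in `ℙ²(ℝ)` iff it is one of the fifteen listed triples; in particular no
four points of `C_{α,β}` are collinear.
-/
theorem stmt_1 (α β : ℝ) (hα : α = 1 ∨ α = -1) (hβ : β = 1 ∨ β = -1) :
    (∀ p q r : ProjPlaneR, p ∈ Cconf α β → q ∈ Cconf α β → r ∈ Cconf α β →
      p ≠ q → p ≠ r → q ≠ r →
      (ProjCollinear {p, q, r} ↔
        (({p, q, r} : Set ProjPlaneR) = {V₁, S₁, S₁₀ β} ∨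
         ({p, q, r} : Set ProjPlaneR) = {V₁, S₂, S₄} ∨
         ({p, q, r} : Set ProjPlaneR) = {V₁, S₃, S₆ α} ∨
         ({p, q, r} : Set ProjPlaneR) = {V₁, S₅ α, S₇ α} ∨
         ({p, q, r} : Set ProjPlaneR) = {V₁, S₈ β, S₉ β} ∨
         ({p, q, r} : Set ProjPlaneR) = {V₂, S₁, S₇ α} ∨
         ({p, q, r} : Set ProjPlaneR) = {V₂, S₂, S₃} ∨
         ({p, q, r} : Set ProjPlaneR) = {V₂, S₄, S₉ β} ∨
         ({p, q, r} : Set ProjPlaneR) = {V₂, S₅ α, S₆ α} ∨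
         ({p, q, r} : Set ProjPlaneR) = {V₂, S₈ β, S₁₀ β} ∨
         ({p, q, r} : Set ProjPlaneR) = {V₃, S₁, S₂} ∨
         ({p, q, r} : Set ProjPlaneR) = {V₃, S₃, S₅ α} ∨
         ({p, q, r} : Set ProjPlaneR) = {V₃, S₄, S₈ β} ∨
         ({p, q, r} : Set ProjPlaneR) = {V₃, S₆ α, S₇ α} ∨
         ({p, q, r} : Set ProjPlaneR) = {V₃, S₉ β, S₁₀ β}))) ∧
    (∀ p q r s : ProjPlaneR, p ∈ Cconf α β → q ∈ Cconf α β → r ∈ Cconf α β → s ∈ Cconf α β →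
      p ≠ q → p ≠ r → p ≠ s → q ≠ r → q ≠ s → r ≠ s →
      ¬ ProjCollinear {p, q, r, s})  := by
  obtain ⟨sa, hsa⟩ : ∃ sa : Bool, α = ((sg sa : ℤ) : ℝ) := by
    rcases hα with h | h
    · exact ⟨true, by norm_num [sg, h]⟩
    · exact ⟨false, by norm_num [sg, h]⟩
  obtain ⟨sb, hsb⟩ : ∃ sb : Bool, β = ((sg sb : ℤ) : ℝ) := by
    rcases hβ with h | h
    · exact ⟨true, by norm_num [sg, h]⟩
    · exact ⟨false, by norm_num [sg, h]⟩
  have hdR : ∀ i j k : Fin 13,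
      d3 (vecR α β i) (vecR α β j) (vecR α β k) = ((dZ sa sb i j k : ℤ) : ℝ) := by
    subst hsa; subst hsb; exact dR_cast sa sb
  have coll_iff : ∀ i j k : Fin 13,
      ProjCollinear {Pt α β i, Pt α β j, Pt α β k} ↔ dZ sa sb i j k = 0 := by
    intro i j k
    simp only [Pt]
    rw [collinear_iff_d3, hdR, Int.cast_eq_zero]
  have hinj : Function.Injective (Pt α β) := by
    intro i j h
    by_contra hij
    obtain ⟨k, hk⟩ := DEC2 sa sb i j hij
    apply hk
    simp only [Pt] at h
    rw [Projectivization.mk_eq_mk_iff'] at h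
    obtain ⟨a, ha⟩ := h
    have h0 : d3 (vecR α β i) (vecR α β j) (vecR α β k) = 0 := by
      rw [← ha]; simp only [d3, Pi.smul_apply, smul_eq_mul]; ring
    rw [hdR, Int.cast_eq_zero] at h0
    exact h0
  have hset : ∀ i j k a b c : Fin 13,
      (({Pt α β i, Pt α β j, Pt α β k} : Set ProjPlaneR) = {Pt α β a, Pt α β b, Pt α β c}) ↔
        (({i, j, k} : Finset (Fin 13)) = {a, b, c}) := by
    have him : ∀ x y z : Fin 13,
        ({Pt α β x, Pt α β y, Pt α β z} : Set ProjPlaneR) = Pt α β '' {x, y, z} := by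
      intro x y z; simp [Set.image_insert_eq]
    intro i j k a b c
    rw [him, him, Set.image_eq_image hinj]
    constructor
    · intro h
      apply Finset.coe_injective
      simpa using h
    · intro h
      have := congrArg (fun s : Finset (Fin 13) => (s : Set (Fin 13))) h
      simpa using this
  have e0 : V₁ = Pt α β 0 := rfl
  have e1 : V₂ = Pt α β 1 := rfl
  have e2 : V₃ = Pt α β 2 := rfl
  have e3 : S₁ = Pt α β 3 := rfl
  have e4 : S₂ = Pt α β 4 := rfl
  have e5 : S₃ = Pt α β 5 := rfl
  have e6 : S₄ = Pt α β 6 := rfl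
  have e7 : S₅ α = Pt α β 7 := rfl
  have e8 : S₆ α = Pt α β 8 := rfl
  have e9 : S₇ α = Pt α β 9 := rfl
  have e10 : S₈ β = Pt α β 10 := rfl
  have e11 : S₉ β = Pt α β 11 := rfl
  have e12 : S₁₀ β = Pt α β 12 := rfl
  have hmem : ∀ x ∈ Cconf α β, ∃ i : Fin 13, x = Pt α β i := by
    intro x hx
    simp only [Cconf, Set.mem_insert_iff, Set.mem_singleton_iff] at hx
    rcases hx with rfl | rfl | rfl | rfl | rfl | rfl | rfl | rfl | rfl | rfl | rfl | rfl | rfl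
    exacts [⟨0, e0⟩, ⟨1, e1⟩, ⟨2, e2⟩, ⟨3, e3⟩, ⟨4, e4⟩, ⟨5, e5⟩, ⟨6, e6⟩, ⟨7, e7⟩,
      ⟨8, e8⟩, ⟨9, e9⟩, ⟨10, e10⟩, ⟨11, e11⟩, ⟨12, e12⟩]
  constructor
  · intro p q r hp hq hr hpq hpr hqr
    obtain ⟨i, rfl⟩ := hmem p hp
    obtain ⟨j, rfl⟩ := hmem q hq
    obtain ⟨k, rfl⟩ := hmem r hr
    have hij : i ≠ j := fun h => hpq (by rw [h])
    have hik : i ≠ k := fun h => hpr (by rw [h])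
    have hjk : j ≠ k := fun h => hqr (by rw [h])
    rw [coll_iff i j k, e0, e1, e2, e3, e4, e5, e6, e7, e8, e9, e10, e11, e12]
    simp only [hset]
    exact DEC1 sa sb i j k hij hik hjk
  · intro p q r s hp hq hr hs hpq hpr hps hqr hqs hrs
    obtain ⟨i, rfl⟩ := hmem p hp
    obtain ⟨j, rfl⟩ := hmem q hq
    obtain ⟨k, rfl⟩ := hmem r hr
    obtain ⟨l, rfl⟩ := hmem s hs
    have hij : i ≠ j := fun h => hpq (by rw [h])
    have hik : i ≠ k := fun h => hpr (by rw [h])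
    have hil : i ≠ l := fun h => hps (by rw [h])
    have hjk : j ≠ k := fun h => hqr (by rw [h])
    have hjl : j ≠ l := fun h => hqs (by rw [h])
    have hkl : k ≠ l := fun h => hrs (by rw [h])
    intro hc
    have h1 : ProjCollinear {Pt α β i, Pt α β j, Pt α β k} :=
      collinear_mono (by
        intro x hx
        simp only [Set.mem_insert_iff, Set.mem_singleton_iff] at hx ⊢
        tauto) hc
    have h2 : ProjCollinear {Pt α β i, Pt α β j, Pt α β l} :=
      collinear_mono (by
        intro x hx
        simp only [Set.mem_insert_iff, Set.mem_singleton_iff] at hx ⊢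
        tauto) hc
    have D1 := (DEC1 sa sb i j k hij hik hjk).mp ((coll_iff i j k).mp h1)
    have D2 := (DEC1 sa sb i j l hij hil hjl).mp ((coll_iff i j l).mp h2)
    have toEx : ∀ x y z : Fin 13,
        ((({x,y,z} : Finset (Fin 13)) = {0,3,12} ∨ ({x,y,z} : Finset (Fin 13)) = {0,4,6} ∨
          ({x,y,z} : Finset (Fin 13)) = {0,5,8} ∨ ({x,y,z} : Finset (Fin 13)) = {0,7,9} ∨
          ({x,y,z} : Finset (Fin 13)) = {0,10,11} ∨ ({x,y,z} : Finset (Fin 13)) = {1,3,9} ∨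
          ({x,y,z} : Finset (Fin 13)) = {1,4,5} ∨ ({x,y,z} : Finset (Fin 13)) = {1,6,11} ∨
          ({x,y,z} : Finset (Fin 13)) = {1,7,8} ∨ ({x,y,z} : Finset (Fin 13)) = {1,10,12} ∨
          ({x,y,z} : Finset (Fin 13)) = {2,3,4} ∨ ({x,y,z} : Finset (Fin 13)) = {2,5,7} ∨
          ({x,y,z} : Finset (Fin 13)) = {2,6,10} ∨ ({x,y,z} : Finset (Fin 13)) = {2,8,9} ∨
          ({x,y,z} : Finset (Fin 13)) = {2,11,12}) →
          ∃ m : Fin 15, ({x,y,z} : Finset (Fin 13)) = LF m) := by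
      intro x y z h
      rcases h with h|h|h|h|h|h|h|h|h|h|h|h|h|h|h
      exacts [⟨0, h.trans rfl⟩, ⟨1, h.trans rfl⟩, ⟨2, h.trans rfl⟩, ⟨3, h.trans rfl⟩,
        ⟨4, h.trans rfl⟩, ⟨5, h.trans rfl⟩, ⟨6, h.trans rfl⟩, ⟨7, h.trans rfl⟩,
        ⟨8, h.trans rfl⟩, ⟨9, h.trans rfl⟩, ⟨10, h.trans rfl⟩, ⟨11, h.trans rfl⟩,
        ⟨12, h.trans rfl⟩, ⟨13, h.trans rfl⟩, ⟨14, h.trans rfl⟩]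
    obtain ⟨m, hm⟩ := toEx i j k D1
    obtain ⟨n, hn⟩ := toEx i j l D2
    by_cases hmn : m = n
    · subst hmn
      have hl : l ∈ ({i, j, k} : Finset (Fin 13)) := by
        rw [hm, ← hn]; simp
      simp only [Finset.mem_insert, Finset.mem_singleton] at hl
      rcases hl with h | h | h
      · exact hil h.symm
      · exact hjl h.symm
      · exact hkl h.symm
    · exact hij (DEC_inter m n hmn i j
        (by rw [← hm]; simp) (by rw [← hn]; simp) (by rw [← hm]; simp) (by rw [← hn]; simp))

end
end

section
/- For α, β ∈ {−1, 1}, let ℓ₁₂ be the projective line of ℙ²(ℝ) through the points S₁ and S₂ of C_{α,β}, let ℓ₅₆ be the line through S₅ and S₆, and let ℓ₈₉ be the line through S₈ and S₉. Then the three lines ℓ₁₂, ℓ₅₆, ℓ₈₉ have a common point if and only if αβ = 1. -/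
noncomputable section

/-- The projective line of `ℙ²(ℝ)` through two points `p` and `q`:
the set of points whose representative lies in the span of representatives of `p` and `q`. -/
def lineThrough (p q : ProjPlaneR) : Set ProjPlaneR :=
  {x | x.rep ∈ Submodule.span ℝ ({p.rep, q.rep} : Set (Fin 3 → ℝ))}


lemma rep_mk_exists (v : Fin 3 → ℝ) (h : v ≠ 0) :
    ∃ c : ℝ, c ≠ 0 ∧ (Projectivization.mk ℝ v h).rep = c • v := by
  have h1 := Projectivization.mk_rep (Projectivization.mk ℝ v h)
  rw [Projectivization.mk_eq_mk_iff] at h1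
  obtain ⟨a, ha⟩ := h1
  exact ⟨(a : ℝ), a.ne_zero, by rw [← ha]; simp [Units.smul_def]⟩

lemma mem_line_iff (x : ProjPlaneR) (a1 b1 c1 a2 b2 c2 : ℝ)
    (h1 : ![a1, b1, c1] ≠ 0) (h2 : ![a2, b2, c2] ≠ 0) :
    x ∈ lineThrough (mkP a1 b1 c1 h1) (mkP a2 b2 c2 h2) ↔
      ∃ s t : ℝ, x.rep = s • ![a1, b1, c1] + t • ![a2, b2, c2] := by
  obtain ⟨c, hc, hcv⟩ := rep_mk_exists _ h1
  obtain ⟨d, hd, hdw⟩ := rep_mk_exists _ h2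
  simp only [lineThrough, Set.mem_setOf_eq, mkP, hcv, hdw, Submodule.mem_span_pair]
  constructor
  · rintro ⟨a, b, h⟩
    exact ⟨a * c, b * d, by rw [← h, ← smul_smul, ← smul_smul]⟩
  · rintro ⟨s, t, h⟩
    refine ⟨s / c, t / d, ?_⟩
    rw [h, smul_smul, smul_smul, div_mul_cancel₀ _ hc, div_mul_cancel₀ _ hd]

lemma comp_eq {r : Fin 3 → ℝ} {s t a1 b1 c1 a2 b2 c2 : ℝ}
    (h : r = s • ![a1, b1, c1] + t • ![a2, b2, c2]) :
    r 0 = s * a1 + t * a2 ∧ r 1 = s * b1 + t * b2 ∧ r 2 = s * c1 + t * c2 := by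
  refine ⟨?_, ?_, ?_⟩ <;> rw [h] <;> simp

/--
For `α, β ∈ {−1,1}`, the line `ℓ₁₂` through `S₁, S₂`, the line `ℓ₅₆`
through `S₅, S₆`, and the line `ℓ₈₉` through `S₈, S₉` of the configuration `C_{α,β}`
have a common point if and only if `αβ = 1`.
-/
theorem stmt_15 (α β : ℝ) (hα : α = 1 ∨ α = -1) (hβ : β = 1 ∨ β = -1) :
    (∃ x : ProjPlaneR,
      x ∈ lineThrough S₁ S₂ ∧ x ∈ lineThrough (S₅ α) (S₆ α) ∧
      x ∈ lineThrough (S₈ β) (S₉ β)) ↔ α * β = 1 := by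
  constructor
  · rintro ⟨x, hx12, hx56, hx89⟩
    rw [S₁, S₂, mem_line_iff] at hx12
    rw [S₅, S₆, mem_line_iff] at hx56
    rw [S₈, S₉, mem_line_iff] at hx89
    obtain ⟨s, t, h12⟩ := hx12
    obtain ⟨u, v, h56⟩ := hx56
    obtain ⟨p, q, h89⟩ := hx89
    obtain ⟨e10, e11, e12⟩ := comp_eq h12
    obtain ⟨e20, e21, e22⟩ := comp_eq h56
    obtain ⟨e30, e31, e32⟩ := comp_eq h89
    rcases hα with rfl | rfl <;> rcases hβ with rfl | rfl
    · norm_num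
    · exfalso
      apply x.rep_nonzero
      have h0z : x.rep 0 = 0 := by linarith
      have h1z : x.rep 1 = 0 := by linarith
      have h2z : x.rep 2 = 0 := by linarith
      funext i
      fin_cases i
      · exact h0z
      · exact h1z
      · exact h2z
    · exfalso
      apply x.rep_nonzero
      have h0z : x.rep 0 = 0 := by linarith
      have h1z : x.rep 1 = 0 := by linarith
      have h2z : x.rep 2 = 0 := by linarith
      funext i
      fin_cases i
      · exact h0z
      · exact h1z
      · exact h2z
    · norm_num
  · intro hab
    have hαβ : α = β := by
      rcases hα with rfl | rfl <;> rcases hβ with rfl | rfl <;> linarith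
    rcases hα with rfl | rfl
    · subst hαβ
      obtain ⟨e, he, hrep⟩ := rep_mk_exists ![2, 2, 1] (vne 2 2 1 0 (by norm_num))
      refine ⟨mkP 2 2 1 (vne 2 2 1 0 (by norm_num)), ?_, ?_, ?_⟩ <;>
        [rw [S₁, S₂, mem_line_iff]; rw [S₅, S₆, mem_line_iff]; rw [S₈, S₉, mem_line_iff]]
      · exact ⟨e * (2/3), e * (1/3), hrep.trans (by funext i; fin_cases i <;> simp <;> ring)⟩
      · exact ⟨e * (5/2), e * (-9/2), hrep.trans (by funext i; fin_cases i <;> simp <;> ring)⟩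
      · exact ⟨e * (5/2), e * (-9/2), hrep.trans (by funext i; fin_cases i <;> simp <;> ring)⟩
    · subst hαβ
      obtain ⟨e, he, hrep⟩ := rep_mk_exists ![2, 2, -1] (vne 2 2 (-1) 0 (by norm_num))
      refine ⟨mkP 2 2 (-1) (vne 2 2 (-1) 0 (by norm_num)), ?_, ?_, ?_⟩ <;>
        [rw [S₁, S₂, mem_line_iff]; rw [S₅, S₆, mem_line_iff]; rw [S₈, S₉, mem_line_iff]]
      · exact ⟨e * (-2), e * 1, hrep.trans (by funext i; fin_cases i <;> simp <;> ring)⟩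
      · exact ⟨e * (-1/2), e * (-3/2), hrep.trans (by funext i; fin_cases i <;> simp <;> ring)⟩
      · exact ⟨e * (-1/2), e * (-3/2), hrep.trans (by funext i; fin_cases i <;> simp <;> ring)⟩

end
end
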